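/- Let n be a nonnegative integer and let f_n be the real polynomial f_n(x) = ∏_{j=0}^{n-1} (x - j). Then for every integer m ≥ 1 and every real number x not belonging to {0, 1, ..., n-1}, one has m · (D^m f_n)(x) / m! = - Σ_{h=0}^{m-1} (-1)^(m-h) · ((D^h f_n)(x) / h!) · Σ_{j=0}^{n-1} 1/(x - j)^(m-h), where D^m f_n denotes the m-th derivative of the polynomial f_n. -/

import Mathlib

open Polynomial

open Finset in
lemma aux_esymm_eval (n h : ℕ) (y : Fin n → ℝ) :
    MvPolynomial.aeval y (MvPolynomial.esymm (Fin n) ℝ h)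
      = ∑ t ∈ Finset.powersetCard h (Finset.univ : Finset (Fin n)), ∏ i ∈ t, y i := by
  simp [MvPolynomial.esymm, map_sum, map_prod]

open Finset in
lemma aux_key (n h : ℕ) (x : ℝ) (hx : ∀ j < n, x ≠ (j : ℝ)) :
    (Polynomial.derivative^[h] (∏ j ∈ Finset.range n, (X - C (j : ℝ)))).eval x
      = (h.factorial : ℝ) * ((∏ j ∈ Finset.range n, (x - (j : ℝ))) *
          (MvPolynomial.aeval (fun i : Fin n => (x - ((i : ℕ) : ℝ))⁻¹)
            (MvPolynomial.esymm (Fin n) ℝ h))) := by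
  classical
  have hne : ∀ i : Fin n, x - ((i : ℕ) : ℝ) ≠ 0 := fun i =>
    sub_ne_zero.2 (hx i i.isLt)
  have hF : (∏ j ∈ Finset.range n, (X - C (j : ℝ)))
      = ∏ i : Fin n, (X - C ((i : ℕ) : ℝ)) :=
    (Fin.prod_univ_eq_prod_range _ n).symm
  have hPr : (∏ j ∈ Finset.range n, (x - (j : ℝ))) = ∏ i : Fin n, (x - ((i : ℕ) : ℝ)) :=
    (Fin.prod_univ_eq_prod_range _ n).symm
  by_cases hhn : h ≤ n
  · -- main case
    rw [hF, hPr]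
    rw [← Polynomial.factorial_smul_hasseDeriv]
    simp only [LinearMap.smul_apply]
    rw [Polynomial.eval_smul, ← Polynomial.taylor_coeff]
    have htaylor : Polynomial.taylor x (∏ i : Fin n, (X - C ((i : ℕ) : ℝ)))
        = ∏ i : Fin n, (X + C (x - ((i : ℕ) : ℝ))) := by
      rw [show (Polynomial.taylor x : ℝ[X] →ₗ[ℝ] ℝ[X]) (∏ i : Fin n, (X - C ((i : ℕ) : ℝ)))
          = Polynomial.taylorAlgHom x (∏ i : Fin n, (X - C ((i : ℕ) : ℝ))) from rfl]
      rw [map_prod]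
      congr 1
      ext i
      simp [Polynomial.coe_taylorAlgHom, Polynomial.taylor_apply, sub_comp]
      ring
    rw [htaylor]
    have hcard : h ≤ #(Finset.univ : Finset (Fin n)) := by simpa using hhn
    rw [Finset.prod_X_add_C_coeff _ _ hcard]
    rw [aux_esymm_eval]
    have main : (∑ t ∈ Finset.powersetCard (#(Finset.univ : Finset (Fin n)) - h)
          (Finset.univ : Finset (Fin n)), ∏ i ∈ t, (x - ((i : ℕ) : ℝ)))
        = (∏ i : Fin n, (x - ((i : ℕ) : ℝ))) *
          ∑ S ∈ Finset.powersetCard h (Finset.univ : Finset (Fin n)),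
            ∏ i ∈ S, (x - ((i : ℕ) : ℝ))⁻¹ := by
      rw [Finset.mul_sum]
      refine Finset.sum_nbij' (fun t => tᶜ) (fun S => Sᶜ) ?_ ?_ ?_ ?_ ?_
      · intro t ht
        rw [Finset.mem_powersetCard_univ] at ht ⊢
        rw [Finset.card_compl, ht]
        simp only [Finset.card_univ, Fintype.card_fin]
        omega
      · intro S hS
        rw [Finset.mem_powersetCard_univ] at hS ⊢
        rw [Finset.card_compl, hS]
        simp
      · intro t _; simp
      · intro S _; simp
      · intro t ht
        rw [Finset.mem_powersetCard_univ] at ht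
        have hsplit : (∏ i : Fin n, (x - ((i : ℕ) : ℝ)))
            = (∏ i ∈ t, (x - ((i : ℕ) : ℝ))) * ∏ i ∈ tᶜ, (x - ((i : ℕ) : ℝ)) :=
          (Finset.prod_mul_prod_compl t _).symm
        have hprodne : (∏ i ∈ tᶜ, (x - ((i : ℕ) : ℝ))) ≠ 0 :=
          Finset.prod_ne_zero_iff.2 fun i _ => hne i
        rw [Finset.prod_inv_distrib, hsplit, mul_assoc, mul_inv_cancel₀ hprodne, mul_one]
    rw [main, nsmul_eq_mul]
  · -- degenerate case h > n
    push_neg at hhn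
    have h1 : Polynomial.derivative^[h] (∏ j ∈ Finset.range n, (X - C (j : ℝ))) = 0 := by
      apply Polynomial.iterate_derivative_eq_zero
      calc (∏ j ∈ Finset.range n, (X - C (j : ℝ))).natDegree
          ≤ ∑ j ∈ Finset.range n, (X - C (j : ℝ)).natDegree := Polynomial.natDegree_prod_le _ _
        _ ≤ n := by
            apply le_trans (Finset.sum_le_card_nsmul _ _ 1 ?_)
            · simp
            · intro j _; exact Polynomial.natDegree_X_sub_C_le _
        _ < h := hhn
    have h2 : Finset.powersetCard h (Finset.univ : Finset (Fin n)) = ∅ := by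
      rw [Finset.powersetCard_eq_empty]
      simpa using hhn
    rw [h1, aux_esymm_eval, h2]
    simp

open Finset in
lemma aux_newton (n m : ℕ) (y : Fin n → ℝ) :
    (m : ℝ) * MvPolynomial.aeval y (MvPolynomial.esymm (Fin n) ℝ m)
      = (-1 : ℝ) ^ (m + 1) *
        ∑ a ∈ (Finset.HasAntidiagonal.antidiagonal m).filter (fun a => a.1 < m),
          (-1 : ℝ) ^ a.1 * MvPolynomial.aeval y (MvPolynomial.esymm (Fin n) ℝ a.1) *
            ∑ i : Fin n, y i ^ a.2 := by
  have := congrArg (MvPolynomial.aeval y) (MvPolynomial.mul_esymm_eq_sum (Fin n) ℝ m)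
  simpa [MvPolynomial.psum, map_sum, map_mul, map_pow, mul_assoc] using this

theorem falling_factorial_derivative_convolution (n : ℕ) (m : ℕ) (hm : 1 ≤ m) (x : ℝ)
    (hx : ∀ j < n, x ≠ (j : ℝ)) :
    (m : ℝ) * ((Polynomial.derivative^[m]
        (∏ j ∈ Finset.range n, (X - C (j : ℝ)))).eval x) / m.factorial =
      -∑ h ∈ Finset.range m, (-1 : ℝ) ^ (m - h) *
        ((Polynomial.derivative^[h]
            (∏ j ∈ Finset.range n, (X - C (j : ℝ)))).eval x / h.factorial) *
        ∑ j ∈ Finset.range n, 1 / (x - j) ^ (m - h) := by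
  classical
  set y : Fin n → ℝ := fun i => (x - ((i : ℕ) : ℝ))⁻¹ with hy
  set P : ℝ := ∏ j ∈ Finset.range n, (x - (j : ℝ)) with hP
  set E : ℕ → ℝ := fun h => MvPolynomial.aeval y (MvPolynomial.esymm (Fin n) ℝ h) with hE
  have hkey : ∀ h : ℕ,
      (Polynomial.derivative^[h] (∏ j ∈ Finset.range n, (X - C (j : ℝ)))).eval x
        = (h.factorial : ℝ) * (P * E h) := fun h => aux_key n h x hx
  have hfac : ∀ h : ℕ, ((h.factorial : ℝ)) ≠ 0 := fun h => by
    exact_mod_cast h.factorial_ne_zero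
  have hpow : ∀ k : ℕ, (∑ i : Fin n, y i ^ k) = ∑ j ∈ Finset.range n, 1 / (x - j) ^ k := by
    intro k
    rw [hy]
    rw [Fin.sum_univ_eq_sum_range (fun j => (x - (j : ℝ))⁻¹ ^ k)]
    refine Finset.sum_congr rfl fun j _ => ?_
    rw [one_div, inv_pow]
  rw [hkey m]
  have hLHS : (m : ℝ) * ((m.factorial : ℝ) * (P * E m)) / m.factorial = (m : ℝ) * (P * E m) := by
    rw [mul_div_assoc, mul_div_cancel_left₀ _ (hfac m)]
  rw [hLHS]
  have hnewton := aux_newton n m y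
  have hre : ∑ h ∈ Finset.range m, (-1 : ℝ) ^ (m - h) *
        ((Polynomial.derivative^[h]
            (∏ j ∈ Finset.range n, (X - C (j : ℝ)))).eval x / h.factorial) *
        ∑ j ∈ Finset.range n, 1 / (x - j) ^ (m - h)
      = ∑ a ∈ (Finset.HasAntidiagonal.antidiagonal m).filter (fun a => a.1 < m),
          -(P * ((-1 : ℝ) ^ (m + 1) * ((-1 : ℝ) ^ a.1 * E a.1 * ∑ i : Fin n, y i ^ a.2))) := by
    refine Finset.sum_nbij' (fun h => (h, m - h)) (fun a => a.1) ?_ ?_ ?_ ?_ ?_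
    · intro h hh
      rw [Finset.mem_range] at hh
      simp only [Finset.mem_filter, Finset.HasAntidiagonal.mem_antidiagonal]
      exact ⟨by omega, hh⟩
    · intro a ha
      simp only [Finset.mem_filter, Finset.HasAntidiagonal.mem_antidiagonal] at ha
      exact Finset.mem_range.2 ha.2
    · intro h _; rfl
    · intro a ha
      simp only [Finset.mem_filter, Finset.HasAntidiagonal.mem_antidiagonal] at ha
      have h2 : m - a.1 = a.2 := by omega
      simp [h2]
    · intro h hh
      rw [Finset.mem_range] at hh
      rw [hkey h]
      have h1 : (h.factorial : ℝ) * (P * E h) / h.factorial = P * E h :=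
        mul_div_cancel_left₀ _ (hfac h)
      rw [h1, hpow (m - h)]
      have h2 : (-1 : ℝ) ^ h * (-1 : ℝ) ^ h = 1 := by
        rw [← pow_add]
        exact Even.neg_one_pow ⟨h, rfl⟩
      have hsign0 : (-1 : ℝ) ^ (m - h) * (-1 : ℝ) ^ h = (-1 : ℝ) ^ m := by
        rw [← pow_add]
        congr 1
        omega
      have hsign : (-1 : ℝ) ^ (m - h) = (-1 : ℝ) ^ m * (-1 : ℝ) ^ h := by
        calc (-1 : ℝ) ^ (m - h) = (-1 : ℝ) ^ (m - h) * ((-1 : ℝ) ^ h * (-1 : ℝ) ^ h) := by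
              rw [h2, mul_one]
          _ = ((-1 : ℝ) ^ (m - h) * (-1 : ℝ) ^ h) * (-1 : ℝ) ^ h := by ring
          _ = (-1 : ℝ) ^ m * (-1 : ℝ) ^ h := by rw [hsign0]
      rw [hsign]
      ring
  rw [hre, Finset.sum_neg_distrib, neg_neg, ← Finset.mul_sum, ← Finset.mul_sum, ← hnewton]
  ring
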